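/- If g is a nilpotent Lie algebra of nilpotency class c, then every almost inner derivation D of g is a nilpotent linear map; in fact D^c = 0. -/
import Mathlib


/-- If `g` is nilpotent of class `c` (i.e. `γ_{c+1}(g) = 0`), then every
almost inner derivation `D` of `g` is a nilpotent linear map; in fact `D^c = 0`. -/
theorem stmt10 {K L : Type*} [Field K] [LieRing L] [LieAlgebra K L]
    (c : ℕ) (hc : LieModule.lowerCentralSeries K L L c = ⊥)
    (D : LieDerivation K L L) (hD : ∀ x : L, ∃ y : L, D x = ⁅y, x⁆) :
    (D.toLinearMap ^ c = 0) ∧ IsNilpotent D.toLinearMap := by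
  have key : ∀ (n : ℕ) (x : L), (D.toLinearMap ^ n) x ∈ LieModule.lowerCentralSeries K L L n := by
    intro n
    induction n with
    | zero => intro x; simp [LieModule.lowerCentralSeries]
    | succ n ih =>
      intro x
      have h1 : (D.toLinearMap ^ (n + 1)) x = D.toLinearMap ((D.toLinearMap ^ n) x) := by
        rw [pow_succ']; rfl
      obtain ⟨y, hy⟩ := hD ((D.toLinearMap ^ n) x)
      rw [h1]
      show D ((D.toLinearMap ^ n) x) ∈ _
      rw [hy, LieModule.lowerCentralSeries_succ]
      exact LieSubmodule.lie_mem_lie (LieSubmodule.mem_top y) (ih x)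
  have h0 : D.toLinearMap ^ c = 0 := by
    ext x
    have := key c x
    rw [hc] at this
    simpa using this
  exact ⟨h0, ⟨c, h0⟩⟩
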